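/- Let h'(z) = R·e^{iφ} with R > 0 and ω(z) = e^{iβ} (modulus 1 limit direction), and suppose cos(φ + β/2) > 0. Then the argument of f'(z) := h'(z)·(1 + conj(ω(z))·conj(h'(z))/h'(z)) is congruent to −β/2 modulo π. -/
import Mathlib

open Complex

/-- If `h' = R e^{iφ}` with `R > 0`, `ω = e^{iβ}` and `cos (φ + β/2) > 0`, then the
argument of `f' = h' (1 + conj ω · conj h' / h')` is congruent to `-β/2` modulo `π`. -/
theorem arg_fprime_eq_neg_half_beta_mod_pi
    (R φ β : ℝ) (hR : 0 < R) (hcos : 0 < Real.cos (φ + β / 2))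
    (h' ω f' : ℂ)
    (hh : h' = (R : ℂ) * Complex.exp ((φ : ℂ) * Complex.I))
    (hω : ω = Complex.exp ((β : ℂ) * Complex.I))
    (hf : f' = h' * (1 + (starRingEnd ℂ) ω * (starRingEnd ℂ) h' / h')) :
    ∃ k : ℤ, Complex.arg f' = -β / 2 + k * Real.pi := by
  have hRne : (R : ℂ) ≠ 0 := by exact_mod_cast hR.ne'
  have hh'ne : h' ≠ 0 := by
    rw [hh]; exact mul_ne_zero hRne (Complex.exp_ne_zero _)
  have key : f' = ((2 * R * Real.cos (φ + β / 2) : ℝ) : ℂ)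
      * Complex.exp (((-β / 2 : ℝ) : ℂ) * Complex.I) := by
    rw [hf, mul_add, mul_one, mul_div_cancel₀ _ hh'ne, hh, hω]
    simp only [map_mul, ← Complex.exp_conj, Complex.conj_ofReal, Complex.conj_I, Complex.ofReal_cos,
      Complex.cos, Complex.ofReal_neg, Complex.ofReal_div, Complex.ofReal_add,
      Complex.ofReal_mul, Complex.ofReal_ofNat]
    have e1 : cexp (((φ : ℂ) + (β : ℂ) / 2) * I) * cexp (-(β : ℂ) / 2 * I)
        = cexp ((φ : ℂ) * I) := by rw [← Complex.exp_add]; congr 1; ring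
    have e2 : cexp (-((φ : ℂ) + (β : ℂ) / 2) * I) * cexp (-(β : ℂ) / 2 * I)
        = cexp ((β : ℂ) * -I) * cexp ((φ : ℂ) * -I) := by
      rw [← Complex.exp_add, ← Complex.exp_add]; congr 1; ring
    linear_combination -((R : ℂ) * e1) - (R : ℂ) * e2
  have hpos : 0 < 2 * R * Real.cos (φ + β / 2) := by positivity
  rw [key, Complex.arg_real_mul _ hpos, Complex.arg_exp_mul_I]
  refine ⟨-2 * toIocDiv (mul_pos two_pos Real.pi_pos) (-Real.pi) (-β / 2), ?_⟩
  rw [eq_sub_of_add_eq <| toIocMod_add_toIocDiv_zsmul (mul_pos two_pos Real.pi_pos) (-Real.pi) (-β/2)]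
  rw [zsmul_eq_mul]
  push_cast
  ring
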